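/- Let 0 < d < 1, ξ > 0, and c_l, c_r ≥ 0 with 0 < max(c_l, c_r) ≤ 10⁻⁹·ξ·d. Then for every interval I = [u,v] with v − u = d, there exists a C² function ω on I such that ω(u) = ω(v) = 0, ω'(x) = c_l for x ∈ [u, u+d/3], ω'(x) = c_r for x ∈ [u+2d/3, v], and max(|ω'(x)|, |ω''(x)|) ≤ ξ for all x ∈ I. -/

import Mathlib

/-- Gluing lemma for `HasDerivWithinAt` on adjacent closed intervals. -/
theorem glueDeriv {a b c : ℝ} (hab : a ≤ b) (hbc : b ≤ c)
    {F G f g : ℝ → ℝ}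
    (hF : ∀ x ∈ Set.Icc a b, HasDerivWithinAt F (f x) (Set.Icc a b) x)
    (hG : ∀ x ∈ Set.Icc b c, HasDerivWithinAt G (g x) (Set.Icc b c) x)
    (hFG : F b = G b) (hfg : f b = g b) :
    ∀ x ∈ Set.Icc a c, HasDerivWithinAt (fun y => if y ≤ b then F y else G y)
      (if x ≤ b then f x else g x) (Set.Icc a c) x := by
  intro x hx
  have hIccL : Set.Icc a b = Set.Icc a c ∩ Set.Iic b := by
    ext y
    simp only [Set.mem_Icc, Set.mem_inter_iff, Set.mem_Iic]
    exact ⟨fun ⟨h1, h2⟩ => ⟨⟨h1, h2.trans hbc⟩, h2⟩, fun ⟨⟨h1, _⟩, h2⟩ => ⟨h1, h2⟩⟩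
  have hIccR : Set.Icc b c = Set.Icc a c ∩ Set.Ici b := by
    ext y
    simp only [Set.mem_Icc, Set.mem_inter_iff, Set.mem_Ici]
    exact ⟨fun ⟨h1, h2⟩ => ⟨⟨hab.trans h1, h2⟩, h1⟩, fun ⟨⟨_, h2⟩, h1⟩ => ⟨h1, h2⟩⟩
  have hHF : ∀ y ∈ Set.Icc a b, (if y ≤ b then F y else G y) = F y := fun y hy => if_pos hy.2
  have hHG : ∀ y ∈ Set.Icc b c, (if y ≤ b then F y else G y) = G y := by
    intro y hy
    rcases eq_or_lt_of_le hy.1 with h | h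
    · subst h; rw [if_pos le_rfl, hFG]
    · rw [if_neg (not_le.2 h)]
  rcases lt_trichotomy x b with h | h | h
  · rw [if_pos h.le]
    have hx' : x ∈ Set.Icc a b := ⟨hx.1, h.le⟩
    have h1 : HasDerivWithinAt (fun y => if y ≤ b then F y else G y) (f x) (Set.Icc a b) x :=
      (hF x hx').congr hHF (hHF x hx')
    refine h1.mono_of_mem_nhdsWithin ?_
    rw [hIccL]
    exact inter_mem_nhdsWithin _ (Iic_mem_nhds h)
  · subst h
    rw [if_pos le_rfl]
    have h1 := (hF x ⟨hx.1, le_rfl⟩).congr hHF (hHF x ⟨hx.1, le_rfl⟩)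
    have h2 := (hG x ⟨le_rfl, hx.2⟩).congr hHG (hHG x ⟨le_rfl, hx.2⟩)
    rw [← hfg] at h2
    have := h1.union h2
    rwa [Set.Icc_union_Icc_eq_Icc hab hbc] at this
  · rw [if_neg (not_le.2 h)]
    have hx' : x ∈ Set.Icc b c := ⟨h.le, hx.2⟩
    have h1 : HasDerivWithinAt (fun y => if y ≤ b then F y else G y) (g x) (Set.Icc b c) x :=
      (hG x hx').congr hHG (hHG x hx')
    refine h1.mono_of_mem_nhdsWithin ?_
    rw [hIccR]
    exact inter_mem_nhdsWithin _ (Ici_mem_nhds h)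

/-- antiderivative of the transition polynomial -/
noncomputable def Qf (cl cr k t : ℝ) : ℝ :=
  cl*(t^4/2 - t^3 + t) + cr*(t^3 - t^4/2) - k*(t^3/3 - t^4/2 + t^5/5)

/-- transition polynomial for the first derivative -/
noncomputable def Pf (cl cr k t : ℝ) : ℝ :=
  cl*(2*t^3 - 3*t^2 + 1) + cr*(3*t^2 - 2*t^3) - k*(t^2 - 2*t^3 + t^4)

/-- derivative of the transition polynomial -/
noncomputable def Pf' (cl cr k t : ℝ) : ℝ :=
  cl*(6*t^2 - 6*t) + cr*(6*t - 6*t^2) - k*(2*t - 6*t^2 + 4*t^3)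

theorem hasDerivQ (cl cr k s : ℝ) : HasDerivAt (Qf cl cr k) (Pf cl cr k s) s := by
  unfold Qf Pf
  have h3 := hasDerivAt_pow 3 s
  have h4 := hasDerivAt_pow 4 s
  have h5 := hasDerivAt_pow 5 s
  have h1 := hasDerivAt_id s
  have H := ((((h4.div_const 2).sub h3).add h1).const_mul cl).add
      ((h3.sub (h4.div_const 2)).const_mul cr) |>.sub
      ((((h3.div_const 3).sub (h4.div_const 2)).add (h5.div_const 5)).const_mul k)
  refine H.congr_deriv ?_
  push_cast
  ring

theorem hasDerivP (cl cr k s : ℝ) : HasDerivAt (Pf cl cr k) (Pf' cl cr k s) s := by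
  unfold Pf Pf'
  have h2 := hasDerivAt_pow 2 s
  have h3 := hasDerivAt_pow 3 s
  have h4 := hasDerivAt_pow 4 s
  have H := ((((h3.const_mul (2:ℝ)).sub (h2.const_mul 3)).add_const 1).const_mul cl).add
      (((h2.const_mul (3:ℝ)).sub (h3.const_mul 2)).const_mul cr) |>.sub
      (((h2.sub (h3.const_mul (2:ℝ))).add h4).const_mul k)
  refine H.congr_deriv ?_
  push_cast
  ring

set_option maxHeartbeats 2000000 in
theorem stmt_aux (ξ cl cr m u : ℝ) (hm : 0 < m) (hm1 : m ≤ 1) (hξ : 0 < ξ)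
    (hcl : 0 ≤ cl) (hcr : 0 ≤ cr) (hcl' : cl ≤ ξ*m/100) (hcr' : cr ≤ ξ*m/100) :
    ∃ ω ω' ω'' : ℝ → ℝ,
      (∀ x ∈ Set.Icc u (u+3*m), HasDerivWithinAt ω (ω' x) (Set.Icc u (u+3*m)) x) ∧
      (∀ x ∈ Set.Icc u (u+3*m), HasDerivWithinAt ω' (ω'' x) (Set.Icc u (u+3*m)) x) ∧
      ContinuousOn ω'' (Set.Icc u (u+3*m)) ∧
      ω u = 0 ∧ ω (u+3*m) = 0 ∧
      (∀ x ∈ Set.Icc u (u+m), ω' x = cl) ∧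
      (∀ x ∈ Set.Icc (u+2*m) (u+3*m), ω' x = cr) ∧
      (∀ x ∈ Set.Icc u (u+3*m), max |ω' x| |ω'' x| ≤ ξ) := by
  set k := 45*(cl+cr) with hk
  have hmne : m ≠ 0 := ne_of_gt hm
  have hk0 : 0 ≤ k := by positivity
  have h01 : u ≤ u + m := by linarith
  have h12 : u + m ≤ u + 2*m := by linarith
  have h23 : u + 2*m ≤ u + 3*m := by linarith
  have ht : ∀ x : ℝ, HasDerivAt (fun y => (y-(u+m))/m) (1/m) x := fun x =>
    ((hasDerivAt_id x).sub_const (u+m)).div_const m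
  have e0 : ((u+m) - (u+m))/m = 0 := by simp
  have e1 : ((u+2*m) - (u+m))/m = 1 := by
    rw [show (u+2*m) - (u+m) = m by ring, div_self hmne]
  have hPf0 : Pf cl cr k 0 = cl := by norm_num [Pf]
  have hPf1 : Pf cl cr k 1 = cr := by norm_num [Pf]
  have hPf'0 : Pf' cl cr k 0 = 0 := by norm_num [Pf']
  have hPf'1 : Pf' cl cr k 1 = 0 := by norm_num [Pf']
  have hQf0 : Qf cl cr k 0 = 0 := by norm_num [Qf]
  have hQf1 : Qf cl cr k 1 = -(cl+cr) := by simp only [Qf]; rw [hk]; ring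
  have hF1 : ∀ x : ℝ, HasDerivAt (fun y => cl*(y-u)) cl x := fun x => by
    simpa using ((hasDerivAt_id x).sub_const u).const_mul cl
  have hF3 : ∀ x : ℝ, HasDerivAt (fun y => cr*(y-(u+3*m))) cr x := fun x => by
    simpa using ((hasDerivAt_id x).sub_const (u+3*m)).const_mul cr
  have hF2 : ∀ x : ℝ, HasDerivAt (fun y => cl*m + m * Qf cl cr k ((y-(u+m))/m))
      (Pf cl cr k ((x-(u+m))/m)) x := by
    intro x
    have h := (hasDerivQ cl cr k ((x-(u+m))/m)).comp x (ht x)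
    simp only [Function.comp_def] at h
    have h2 := (h.const_mul m).const_add (cl*m)
    refine h2.congr_deriv ?_
    field_simp
  have hD2 : ∀ x : ℝ, HasDerivAt (fun y => Pf cl cr k ((y-(u+m))/m))
      (Pf' cl cr k ((x-(u+m))/m) * (1/m)) x := by
    intro x
    have h := (hasDerivP cl cr k ((x-(u+m))/m)).comp x (ht x)
    simpa [Function.comp_def] using h
  refine ⟨fun x => if x ≤ u+m then cl*(x-u) else if x ≤ u+2*m then
      cl*m + m * Qf cl cr k ((x-(u+m))/m) else cr*(x-(u+3*m)),
    fun x => if x ≤ u+m then cl else if x ≤ u+2*m then Pf cl cr k ((x-(u+m))/m) else cr,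
    fun x => if x ≤ u+m then 0 else if x ≤ u+2*m then Pf' cl cr k ((x-(u+m))/m) * (1/m) else 0,
    ?_, ?_, ?_, ?_, ?_, ?_, ?_, ?_⟩
  · -- ω has derivative ω'
    have gInner := glueDeriv h12 h23
      (fun y _ => (hF2 y).hasDerivWithinAt)
      (fun y _ => (hF3 y).hasDerivWithinAt)
      (by rw [e1, hQf1]; ring)
      (by rw [e1, hPf1])
    have gOuter := glueDeriv h01 (h12.trans h23)
      (fun y _ => (hF1 y).hasDerivWithinAt)
      gInner
      (by rw [if_pos h12, e0, hQf0]; ring)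
      (by rw [if_pos h12, e0, hPf0])
    exact gOuter
  · -- ω' has derivative ω''
    have gInner := glueDeriv h12 h23
      (fun y _ => (hD2 y).hasDerivWithinAt)
      (fun y _ => (hasDerivAt_const y cr).hasDerivWithinAt)
      (by rw [e1, hPf1])
      (by rw [e1, hPf'1]; ring)
    have gOuter := glueDeriv h01 (h12.trans h23)
      (fun y _ => (hasDerivAt_const y cl).hasDerivWithinAt)
      gInner
      (by rw [if_pos h12, e0, hPf0])
      (by rw [if_pos h12, e0, hPf'0]; ring)
    exact gOuter
  · -- continuity of ω''
    have cLin : Continuous fun y : ℝ => (y-(u+m))/m :=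
      (continuous_id.sub continuous_const).div_const m
    have cP' : Continuous (Pf' cl cr k) := by unfold Pf'; fun_prop
    have c2 : Continuous (fun y : ℝ => Pf' cl cr k ((y-(u+m))/m) * (1/m)) :=
      (cP'.comp cLin).mul continuous_const
    have cInner : Continuous (fun y : ℝ =>
        if y ≤ u+2*m then Pf' cl cr k ((y-(u+m))/m) * (1/m) else 0) := by
      refine Continuous.if_le c2 continuous_const (continuous_id : Continuous fun y : ℝ => y)
        continuous_const (fun y hy => ?_)
      subst hy
      rw [e1, hPf'1]; ring
    have cOuter : Continuous (fun y : ℝ => if y ≤ u+m then (0:ℝ) else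
        if y ≤ u+2*m then Pf' cl cr k ((y-(u+m))/m) * (1/m) else 0) := by
      refine Continuous.if_le continuous_const cInner (continuous_id : Continuous fun y : ℝ => y)
        continuous_const (fun y hy => ?_)
      subst hy
      rw [if_pos h12, e0, hPf'0]; ring
    exact cOuter.continuousOn
  · -- ω u = 0
    show (if u ≤ u+m then cl*(u-u) else _) = 0
    rw [if_pos h01]; ring
  · -- ω v = 0
    show (if u+3*m ≤ u+m then _ else if u+3*m ≤ u+2*m then _ else cr*((u+3*m)-(u+3*m))) = 0
    rw [if_neg (not_le.2 (by linarith)), if_neg (not_le.2 (by linarith))]; ring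
  · -- left constant
    intro x hx
    exact if_pos hx.2
  · -- right constant
    intro x hx
    rcases eq_or_lt_of_le hx.1 with h | h
    · rw [← h]
      show (if u+2*m ≤ u+m then cl else if u+2*m ≤ u+2*m then _ else cr) = cr
      rw [if_neg (not_le.2 (by linarith)), if_pos le_rfl, e1, hPf1]
    · show (if x ≤ u+m then cl else if x ≤ u+2*m then _ else cr) = cr
      rw [if_neg (not_le.2 (by linarith)), if_neg (not_le.2 h)]
  · -- bounds
    intro x hx
    have hξm : 0 < ξ*m := mul_pos hξ hm
    have hξm1 : ξ*m ≤ ξ := by nlinarith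
    by_cases hxa : x ≤ u+m
    · simp only [if_pos hxa]
      rw [abs_of_nonneg hcl, abs_zero]
      exact max_le (by linarith) hξ.le
    · by_cases hxb : x ≤ u+2*m
      · simp only [if_neg hxa, if_pos hxb]
        set s := (x-(u+m))/m with hs
        push_neg at hxa
        have hs0 : 0 ≤ s := div_nonneg (by linarith) hm.le
        have hs1 : s ≤ 1 := by rw [hs, div_le_one hm]; linarith
        have hw0 : 0 ≤ s*(1-s) := mul_nonneg hs0 (by linarith)
        have hw1 : s*(1-s) ≤ 1/4 := by nlinarith [sq_nonneg (s-1/2)]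
        have hA1 : 0 ≤ 2*s^3-3*s^2+1 := by
          nlinarith [sq_nonneg (1-s), mul_nonneg hs0 (sq_nonneg (1-s))]
        have hA2 : 2*s^3-3*s^2+1 ≤ 1 := by
          nlinarith [mul_nonneg (sq_nonneg s) (by linarith : (0:ℝ) ≤ 3-2*s)]
        have hB1 : 0 ≤ 3*s^2-2*s^3 := by
          nlinarith [mul_nonneg (sq_nonneg s) (by linarith : (0:ℝ) ≤ 3-2*s)]
        have hB2 : 3*s^2-2*s^3 ≤ 1 := by
          nlinarith [sq_nonneg (1-s), mul_nonneg hs0 (sq_nonneg (1-s))]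
        have hC1 : 0 ≤ s^2-2*s^3+s^4 := by nlinarith [sq_nonneg (s*(1-s))]
        have hC2 : s^2-2*s^3+s^4 ≤ 1/16 := by nlinarith [hw0, hw1]
        have hD1 : -(3/2) ≤ 6*s^2-6*s := by nlinarith [hw1]
        have hD2' : 6*s^2-6*s ≤ 0 := by nlinarith [hw0]
        have hE1 : -(1/2) ≤ 2*s-6*s^2+4*s^3 := by
          nlinarith [mul_nonneg hw0 (by linarith : (0:ℝ) ≤ 2-2*s), hw1]
        have hE2 : 2*s-6*s^2+4*s^3 ≤ 1/2 := by
          nlinarith [mul_nonneg hw0 hs0, hw1]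
        have hPle : Pf cl cr k s ≤ ξ := by
          have t1 := mul_le_mul_of_nonneg_left hA2 hcl
          have t2 := mul_le_mul_of_nonneg_left hB2 hcr
          have t3 := mul_nonneg hk0 hC1
          simp only [Pf]
          linarith [t1, t2, t3]
        have hPge : -ξ ≤ Pf cl cr k s := by
          have t1 := mul_nonneg hcl hA1
          have t2 := mul_nonneg hcr hB1
          have t3 := mul_le_mul_of_nonneg_left hC2 hk0
          simp only [Pf]
          linarith [t1, t2, t3]
        have hP'le : Pf' cl cr k s ≤ ξ*m := by
          have t1 := mul_le_mul_of_nonneg_left hD2' hcl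
          have t2 := mul_le_mul_of_nonneg_left (show 6*s-6*s^2 ≤ 3/2 by linarith) hcr
          have t3 := mul_le_mul_of_nonneg_left (show -(2*s-6*s^2+4*s^3) ≤ 1/2 by linarith) hk0
          simp only [Pf']
          linarith [t1, t2, t3]
        have hP'ge : -(ξ*m) ≤ Pf' cl cr k s := by
          have t1 := mul_le_mul_of_nonneg_left (show -(3/2) ≤ 6*s^2-6*s by linarith) hcl
          have t2 := mul_nonneg hcr (by linarith : (0:ℝ) ≤ 6*s-6*s^2)
          have t3 := mul_le_mul_of_nonneg_left (show 2*s-6*s^2+4*s^3 ≤ 1/2 by linarith) hk0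
          simp only [Pf']
          linarith [t1, t2, t3]
        have habs1 : |Pf cl cr k s| ≤ ξ := abs_le.2 ⟨hPge, hPle⟩
        have habs2 : |Pf' cl cr k s * (1/m)| ≤ ξ := by
          have hb : |Pf' cl cr k s| ≤ ξ*m := abs_le.2 ⟨hP'ge, hP'le⟩
          calc |Pf' cl cr k s * (1/m)| = |Pf' cl cr k s| * (1/m) := by
                rw [abs_mul, abs_of_pos (by positivity : (0:ℝ) < 1/m)]
            _ ≤ (ξ*m) * (1/m) := mul_le_mul_of_nonneg_right hb (by positivity)
            _ = ξ := by field_simp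
        exact max_le habs1 habs2
      · simp only [if_neg hxa, if_neg hxb]
        rw [abs_of_nonneg hcr, abs_zero]
        exact max_le (by linarith) hξ.le

set_option maxHeartbeats 800000 in
/-- Lemma: existence of a `C²` correction function `ω` on `I = [u,v]`. -/
theorem stmt_12 (d ξ cl cr : ℝ)
    (hd0 : 0 < d) (hd1 : d < 1) (hξ : 0 < ξ)
    (hcl : 0 ≤ cl) (hcr : 0 ≤ cr)
    (hmax0 : 0 < max cl cr) (hmax : max cl cr ≤ ξ * d / 10 ^ 9)
    (u v : ℝ) (huv : v - u = d) :
    ∃ ω ω' ω'' : ℝ → ℝ,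
      (∀ x ∈ Set.Icc u v, HasDerivWithinAt ω (ω' x) (Set.Icc u v) x) ∧
      (∀ x ∈ Set.Icc u v, HasDerivWithinAt ω' (ω'' x) (Set.Icc u v) x) ∧
      ContinuousOn ω'' (Set.Icc u v) ∧
      ω u = 0 ∧ ω v = 0 ∧
      (∀ x ∈ Set.Icc u (u + d/3), ω' x = cl) ∧
      (∀ x ∈ Set.Icc (u + 2*d/3) v, ω' x = cr) ∧
      (∀ x ∈ Set.Icc u v, max |ω' x| |ω'' x| ≤ ξ) := by
  have hd3 : (0:ℝ) < d/3 := by linarith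
  have hξd : 0 < ξ*d := mul_pos hξ hd0
  have hmax_cl : cl ≤ ξ * d / 10 ^ 9 := le_trans (le_max_left cl cr) hmax
  have hmax_cr : cr ≤ ξ * d / 10 ^ 9 := le_trans (le_max_right cl cr) hmax
  have hcl2 : cl ≤ ξ*(d/3)/100 := by nlinarith [hmax_cl, hξd]
  have hcr2 : cr ≤ ξ*(d/3)/100 := by nlinarith [hmax_cr, hξd]
  rw [show u + 2*d/3 = u + 2*(d/3) by ring, show v = u + 3*(d/3) by linarith]
  exact stmt_aux ξ cl cr (d/3) u hd3 (by linarith) hξ hcl hcr hcl2 hcr2
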